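/- Let (S, d_S) be a compact metric space, U the closed unit ball of ℝ^d, h : ℝ^d × S × U → ℝ^d continuous, and {a(n)}_{n≥0} real numbers with a(0) ≤ 1, a(n) ≥ a(n+1) > 0, Σ a(n) = ∞ and Σ a(n)² < ∞. Let x_n ∈ ℝ^d, s_n ∈ S, u_n ∈ U, m_{n+1} ∈ ℝ^d satisfy x_{n+1} = x_n + a(n)(h(x_n,s_n,u_n) + m_{n+1}) for all n ≥ 0, with sup_n ‖x_n‖ < ∞, and assume for every T > 0, lim_{n→∞} sup_{n ≤ k ≤ τ(n,T)} ‖Σ_{j=n}^{k} a(j) m_{j+1}‖ = 0, where τ(n,T) := min{m > n : Σ_{k=n}^{m-1} a(k) ≥ T}. Set t(0) := 0, t(n) := Σ_{k=0}^{n-1} a(k), let x̄ : [0,∞) → ℝ^d be the piecewise linear interpolation with x̄(t(n)) = x_n, and for t̃ ≥ 0 let x̃(·; t̃) be the solution on [0,∞) of dx̃(q;t̃)/dq = h(x_{[t̃+q]}, s_{[t̃+q]}, u_{[t̃+q]}) with x̃(0;t̃) = x̄(t̃), where [t] := max{n ≥ 0 : t(n) ≤ t}. Then for every T > 0, lim_{t→∞}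 sup_{0 ≤ q ≤ T} ‖x̄(t+q) − x̃(q;t)‖ = 0. -/

import Mathlib

open Filter Topology MeasureTheory

abbrev Euc (d : ℕ) := EuclideanSpace ℝ (Fin d)

lemma block_aux {E : Type*} [NormedAddCommGroup E] [NormedSpace ℝ E] [CompleteSpace E]
    (f : ℝ → E) (c : E) (dd τ₁ τ₂ : ℝ)
    (hf : ∀ p, τ₁ < p → p < dd → f p = c) (h1 : τ₁ ≤ τ₂) (h2 : τ₂ ≤ dd) :
    IntervalIntegrable f MeasureTheory.volume τ₁ τ₂ ∧
      (∫ p in τ₁..τ₂, f p) = (τ₂ - τ₁) • c := by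
  have hd : ∀ᵐ p : ℝ ∂volume, p ≠ dd := by
    simp [ae_iff]
  have hae : ∀ᵐ p ∂(volume : Measure ℝ), p ∈ Set.uIoc τ₁ τ₂ → f p = c := by
    filter_upwards [hd] with p hp hmem
    rw [Set.uIoc_of_le h1] at hmem
    exact hf p hmem.1 (lt_of_le_of_ne (hmem.2.trans h2) hp)
  constructor
  · exact (intervalIntegrable_const (c := c)).congr_ae
      (((ae_restrict_iff' measurableSet_uIoc).mpr (hae.mono fun p hp h => (hp h).symm)))
  · rw [intervalIntegral.integral_congr_ae hae, intervalIntegral.integral_const]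

theorem stmt_14 {d : ℕ} {S : Type*} [MetricSpace S] [CompactSpace S]
    (h : Euc d → S → (Metric.closedBall (0 : Euc d) 1) → Euc d)
    (hc : Continuous (fun p : Euc d × S × (Metric.closedBall (0 : Euc d) 1) =>
      h p.1 p.2.1 p.2.2))
    (a : ℕ → ℝ) (ha0 : a 0 ≤ 1) (hamono : ∀ n, a (n + 1) ≤ a n) (hapos : ∀ n, 0 < a n)
    (hadiv : Tendsto (fun n => ∑ k ∈ Finset.range n, a k) atTop atTop)
    (hasq : Summable (fun n => (a n) ^ 2))
    (x : ℕ → Euc d) (s : ℕ → S) (u : ℕ → (Metric.closedBall (0 : Euc d) 1))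
    (m : ℕ → Euc d)
    (hrec : ∀ n : ℕ, x (n + 1) = x n + a n • (h (x n) (s n) (u n) + m (n + 1)))
    (hbdd : ∃ C : ℝ, ∀ n, ‖x n‖ ≤ C)
    (hnoise : ∀ T > (0 : ℝ), ∀ ε > (0 : ℝ), ∃ N : ℕ, ∀ n ≥ N, ∀ k : ℕ, n ≤ k →
      k ≤ sInf {j : ℕ | n < j ∧ T ≤ ∑ i ∈ Finset.Ico n j, a i} →
      ‖∑ j ∈ Finset.Icc n k, a j • m (j + 1)‖ ≤ ε)
    (t : ℕ → ℝ) (ht : ∀ n, t n = ∑ k ∈ Finset.range n, a k)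
    (xbar : ℝ → Euc d)
    (hxbar : ∀ n : ℕ, ∀ τ : ℝ, t n ≤ τ → τ < t (n + 1) →
      xbar τ = ((τ - t n) / (t (n + 1) - t n)) • x (n + 1) +
        ((t (n + 1) - τ) / (t (n + 1) - t n)) • x n)
    (idx : ℝ → ℕ) (hidx : ∀ τ : ℝ, 0 ≤ τ → idx τ = sSup {n : ℕ | t n ≤ τ})
    (xt : ℝ → ℝ → Euc d)
    (hxt : ∀ tt : ℝ, 0 ≤ tt → ∀ q : ℝ, 0 ≤ q →
      xt tt q = xbar tt +
        ∫ p in (0 : ℝ)..q, h (x (idx (tt + p))) (s (idx (tt + p))) (u (idx (tt + p)))) :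
    ∀ T > (0 : ℝ), ∀ ε > (0 : ℝ), ∃ t₀ : ℝ, ∀ tt ≥ t₀, ∀ q ∈ Set.Icc (0 : ℝ) T,
      ‖xbar (tt + q) - xt tt q‖ ≤ ε := by
  -- basic facts about t
  have ht0 : t 0 = 0 := by simp [ht]
  have htsucc : ∀ n, t (n + 1) = t n + a n := by
    intro n; simp [ht, Finset.sum_range_succ]
  have htmono : StrictMono t := strictMono_nat_of_lt_succ fun n => by
    rw [htsucc]; linarith [hapos n]
  have htnonneg : ∀ n, 0 ≤ t n := fun n => ht0 ▸ htmono.monotone (Nat.zero_le n)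
  have htop : Tendsto t atTop atTop := by
    have he : t = fun n => ∑ k ∈ Finset.range n, a k := funext ht
    rw [he]; exact hadiv
  have hidx_eq : ∀ (n : ℕ) (τ : ℝ), t n ≤ τ → τ < t (n + 1) → idx τ = n := by
    intro n τ h1 h2
    have hub : ∀ k ∈ {k : ℕ | t k ≤ τ}, k ≤ n := by
      intro k hk
      by_contra hkn
      push_neg at hkn
      have := htmono.monotone (show n + 1 ≤ k from hkn)
      simp only [Set.mem_setOf_eq] at hk
      linarith
    rw [hidx τ (le_trans (htnonneg n) h1)]
    exact le_antisymm (csSup_le ⟨n, h1⟩ hub) (le_csSup ⟨n, hub⟩ h1)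
  have hidx_spec : ∀ τ : ℝ, 0 ≤ τ → t (idx τ) ≤ τ ∧ τ < t (idx τ + 1) := by
    intro τ hτ
    obtain ⟨M, hM⟩ := (htop.eventually_gt_atTop τ).exists
    have hub : ∀ k ∈ {k : ℕ | t k ≤ τ}, k ≤ M := fun k hk =>
      le_of_lt (htmono.lt_iff_lt.mp (lt_of_le_of_lt hk hM))
    have hne : {k : ℕ | t k ≤ τ}.Nonempty := ⟨0, by simpa [ht0] using hτ⟩
    have hmem := Nat.sSup_mem hne ⟨M, hub⟩
    rw [hidx τ hτ]
    refine ⟨hmem, ?_⟩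
    by_contra hcon
    push_neg at hcon
    have : sSup {k : ℕ | t k ≤ τ} + 1 ≤ sSup {k : ℕ | t k ≤ τ} := le_csSup ⟨M, hub⟩ hcon
    omega
  -- formula for xbar inside a block
  have xbar_eq : ∀ (n : ℕ) (τ : ℝ), t n ≤ τ → τ < t (n + 1) →
      xbar τ = x n + (τ - t n) • (h (x n) (s n) (u n) + m (n + 1)) := by
    intro n τ h1 h2
    have han : a n ≠ 0 := ne_of_gt (hapos n)
    have hts : t (n + 1) - t n = a n := by rw [htsucc]; ring
    rw [hxbar n τ h1 h2, hrec n, hts]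
    match_scalars <;> field_simp <;> linarith [htsucc n]
  -- chain integral over grid blocks
  have chain : ∀ (v : ℕ → Euc d) (n k : ℕ), n ≤ k →
      IntervalIntegrable (fun p => v (idx p)) volume (t n) (t k) ∧
      (∫ p in (t n)..(t k), v (idx p)) = ∑ j ∈ Finset.Ico n k, a j • v j := by
    intro v n k hnk
    induction k, hnk using Nat.le_induction with
    | base =>
      refine ⟨by simp [intervalIntegrable_iff], by simp⟩
    | succ k hk ih =>
      have hb := block_aux (fun p => v (idx p)) (v k) (t (k + 1)) (t k) (t (k + 1))
        (fun p hp1 hp2 => congrArg v (hidx_eq k p (le_of_lt hp1) hp2))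
        (le_of_lt (htmono (Nat.lt_succ_self k))) le_rfl
      refine ⟨ih.1.trans hb.1, ?_⟩
      rw [← intervalIntegral.integral_add_adjacent_intervals ih.1 hb.1, ih.2, hb.2,
        Finset.sum_Ico_succ_top hk]
      have hts : t (k + 1) - t k = a k := by rw [htsucc]; ring
      rw [hts]
  -- telescoping
  have hxdiff : ∀ n k : ℕ, n ≤ k →
      x k - x n = ∑ j ∈ Finset.Ico n k, a j • (h (x j) (s j) (u j) + m (j + 1)) := by
    intro n k hnk
    have he : ∀ j ∈ Finset.Ico n k, a j • (h (x j) (s j) (u j) + m (j + 1)) = x (j + 1) - x j := by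
      intro j _
      rw [hrec j, add_sub_cancel_left]
    rw [Finset.sum_congr rfl he, Finset.sum_Ico_eq_sub _ hnk,
      Finset.sum_range_sub, Finset.sum_range_sub]
    abel
  have hIcoSum : ∀ n k : ℕ, n ≤ k → ∑ i ∈ Finset.Ico n k, a i = t k - t n := by
    intro n k hnk
    rw [Finset.sum_Ico_eq_sub _ hnk, ht, ht]
  -- main part
  intro T hT ε hε
  obtain ⟨N, hN⟩ := hnoise (T + 1) (by linarith) (ε / 3) (by linarith)
  have hSne : ∀ n : ℕ, {j : ℕ | n < j ∧ T + 1 ≤ ∑ i ∈ Finset.Ico n j, a i}.Nonempty := by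
    intro n
    obtain ⟨M, hM1, hM2⟩ := ((htop.eventually_ge_atTop (t n + (T + 1))).and
      (eventually_gt_atTop n)).exists
    refine ⟨M, hM2, ?_⟩
    rw [hIcoSum n M (le_of_lt hM2)]
    linarith
  have hend : ∀ j, N ≤ j → a j * ‖m (j + 1)‖ ≤ ε / 3 := by
    intro j hj
    have hinf : j ≤ sInf {i : ℕ | j < i ∧ T + 1 ≤ ∑ i2 ∈ Finset.Ico j i, a i2} :=
      le_of_lt (Nat.sInf_mem (hSne j)).1
    have := hN j hj j le_rfl hinf
    rwa [Finset.Icc_self, Finset.sum_singleton, norm_smul, Real.norm_eq_abs,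
      abs_of_pos (hapos j)] at this
  refine ⟨t N, ?_⟩
  intro tt htt q hq
  obtain ⟨hq0, hqT⟩ := hq
  have htt0 : 0 ≤ tt := le_trans (htnonneg N) htt
  obtain ⟨n, hn⟩ : ∃ n, idx tt = n := ⟨_, rfl⟩
  obtain ⟨k', hk'⟩ : ∃ k', idx (tt + q) = k' := ⟨_, rfl⟩
  obtain ⟨hn1, hn2⟩ := hidx_spec tt htt0
  obtain ⟨hk1, hk2⟩ := hidx_spec (tt + q) (by linarith)
  rw [hn] at hn1 hn2
  rw [hk'] at hk1 hk2
  have hNn : N ≤ n := by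
    by_contra hcon
    push_neg at hcon
    have := htmono.monotone (show n + 1 ≤ N from hcon)
    linarith
  have hnk : n ≤ k' := by
    by_contra hcon
    push_neg at hcon
    have := htmono.monotone (show k' + 1 ≤ n from hcon)
    linarith
  -- rewrite xt
  have hco := intervalIntegral.integral_comp_add_left
    (f := fun y => h (x (idx y)) (s (idx y)) (u (idx y))) (a := (0 : ℝ)) (b := q) tt
  simp only [add_zero] at hco
  have hxteq : xt tt q = xbar tt +
      ∫ p in tt..(tt + q), h (x (idx p)) (s (idx p)) (u (idx p)) := by
    rw [hxt tt htt0 q hq0, hco]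
  rcases eq_or_lt_of_le hnk with heq | hlt
  · -- single block case
    subst heq
    have hdeq : ∀ v : ℕ → Euc d, (∫ p in tt..(tt + q), v (idx p)) = q • v n := by
      intro v
      have hb := block_aux (fun p => v (idx p)) (v n) (t (n + 1)) tt (tt + q)
        (fun p hp1 hp2 => congrArg v (hidx_eq n p (le_trans hn1 (le_of_lt hp1)) hp2))
        (by linarith) (by linarith [htsucc n])
      rw [hb.2]
      congr 1
      ring
    have key : xbar (tt + q) - xt tt q = q • m (n + 1) := by
      rw [hxteq, hdeq (fun j => h (x j) (s j) (u j)),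
        xbar_eq n (tt + q) (by linarith) (by linarith [htsucc n]),
        xbar_eq n tt hn1 hn2]
      module
    rw [key, norm_smul, Real.norm_eq_abs, abs_of_nonneg hq0]
    have hqan : q ≤ a n := by linarith [htsucc n]
    calc q * ‖m (n + 1)‖ ≤ a n * ‖m (n + 1)‖ :=
          mul_le_mul_of_nonneg_right hqan (norm_nonneg _)
      _ ≤ ε / 3 := hend n hNn
      _ ≤ ε := by linarith
  · -- multi block case
    have hd : ∀ v : ℕ → Euc d, (∫ p in tt..(tt + q), v (idx p)) =
        (t (n + 1) - tt) • v n + (∑ j ∈ Finset.Ico (n + 1) k', a j • v j) +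
          ((tt + q) - t k') • v k' := by
      intro v
      have hb1 := block_aux (fun p => v (idx p)) (v n) (t (n + 1)) tt (t (n + 1))
        (fun p hp1 hp2 => congrArg v (hidx_eq n p (le_trans hn1 (le_of_lt hp1)) hp2))
        (le_of_lt hn2) le_rfl
      have hb2 := chain v (n + 1) k' hlt
      have hb3 := block_aux (fun p => v (idx p)) (v k') (t (k' + 1)) (t k') (tt + q)
        (fun p hp1 hp2 => congrArg v (hidx_eq k' p (le_of_lt hp1) hp2)) hk1 (le_of_lt hk2)
      rw [← intervalIntegral.integral_add_adjacent_intervals (hb1.1.trans hb2.1) hb3.1,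
        ← intervalIntegral.integral_add_adjacent_intervals hb1.1 hb2.1,
        hb1.2, hb2.2, hb3.2]
    have hxk : x k' = x n +
        ∑ j ∈ Finset.Ico n k', a j • (h (x j) (s j) (u j) + m (j + 1)) := by
      rw [← hxdiff n k' (le_of_lt hlt)]
      abel
    have key : xbar (tt + q) - xt tt q =
        (t (n + 1) - tt) • m (n + 1) + (∑ j ∈ Finset.Ico (n + 1) k', a j • m (j + 1)) +
          ((tt + q) - t k') • m (k' + 1) := by
      rw [hxteq, hd (fun j => h (x j) (s j) (u j)),
        xbar_eq k' (tt + q) hk1 hk2, xbar_eq n tt hn1 hn2, hxk,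
        Finset.sum_eq_sum_Ico_succ_bot hlt]
      simp only [smul_add, Finset.sum_add_distrib]
      have hts : t (n + 1) = t n + a n := htsucc n
      rw [hts]
      module
    rw [key]
    have hA : ‖(t (n + 1) - tt) • m (n + 1)‖ ≤ ε / 3 := by
      rw [norm_smul, Real.norm_eq_abs, abs_of_nonneg (by linarith)]
      calc (t (n + 1) - tt) * ‖m (n + 1)‖ ≤ a n * ‖m (n + 1)‖ :=
            mul_le_mul_of_nonneg_right (by linarith [htsucc n]) (norm_nonneg _)
        _ ≤ ε / 3 := hend n hNn
    have hC : ‖((tt + q) - t k') • m (k' + 1)‖ ≤ ε / 3 := by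
      rw [norm_smul, Real.norm_eq_abs, abs_of_nonneg (by linarith)]
      calc ((tt + q) - t k') * ‖m (k' + 1)‖ ≤ a k' * ‖m (k' + 1)‖ :=
            mul_le_mul_of_nonneg_right (by linarith [htsucc k']) (norm_nonneg _)
        _ ≤ ε / 3 := hend k' (le_trans hNn (le_of_lt hlt))
    have hB : ‖∑ j ∈ Finset.Ico (n + 1) k', a j • m (j + 1)‖ ≤ ε / 3 := by
      rcases eq_or_lt_of_le (Nat.succ_le_of_lt hlt) with h1 | h1
      · rw [← h1, Finset.Ico_self]
        simp
        linarith
      · have hIcc : Finset.Ico (n + 1) k' = Finset.Icc (n + 1) (k' - 1) := by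
          rw [show k' = (k' - 1) + 1 by omega, Finset.Ico_add_one_right_eq_Icc]
          simp
        have hsInf : k' - 1 ≤ sInf {j : ℕ | n + 1 < j ∧
            T + 1 ≤ ∑ i ∈ Finset.Ico (n + 1) j, a i} := by
          obtain ⟨hj1, hj2⟩ := Nat.sInf_mem (hSne (n + 1))
          set j := sInf {j : ℕ | n + 1 < j ∧ T + 1 ≤ ∑ i ∈ Finset.Ico (n + 1) j, a i} with hjdef
          by_contra hcon
          push_neg at hcon
          have hjk : j ≤ k' := by omega
          rw [hIcoSum (n + 1) j (le_of_lt hj1)] at hj2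
          have h5 : t j ≤ t k' := htmono.monotone hjk
          linarith
        have := hN (n + 1) (by omega) (k' - 1) (by omega) hsInf
        rw [hIcc]
        exact this
    calc ‖(t (n + 1) - tt) • m (n + 1) + (∑ j ∈ Finset.Ico (n + 1) k', a j • m (j + 1)) +
          ((tt + q) - t k') • m (k' + 1)‖
        ≤ ‖(t (n + 1) - tt) • m (n + 1)‖ + ‖∑ j ∈ Finset.Ico (n + 1) k', a j • m (j + 1)‖ +
          ‖((tt + q) - t k') • m (k' + 1)‖ := norm_add₃_le
      _ ≤ ε := by linarith
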